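/- Let κ > λ be infinite cardinals with 2^λ > κ. Then the set {f ∈ κ^κ : f(λ) = f(λ+1)} is clopen in the topology generated by the sets N_η (η : α → κ, α < κ), but it is not a union of at most κ many sets of the form N_η with η : α → κ, α < κ. -/

import Mathlib

open Cardinal Set

universe u v w

namespace GDST

variable {K : Type u} {A : Type v}

/-- The set `N_η` determined by the partial function with domain `Y` and values given by `η`. -/
def nbhd (Y : Set K) (η : K → A) : Set (K → A) := {ζ | ∀ i ∈ Y, ζ i = η i}

/-- Basic κ-open subsets of `K → K`: sets `N_η` where `η` is a partial function with
domain of size `< #K`, together with the empty set. -/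
def IsBasicOpen (S : Set (K → A)) : Prop :=
  (∃ (Y : Set K) (η : K → A), #Y < #K ∧ S = nbhd Y η) ∨ S = ∅

/-- Open in the topology generated by the basic κ-open sets. -/
def IsOpenStd (U : Set (K → A)) : Prop :=
  ∀ ζ ∈ U, ∃ S : Set (K → A), IsBasicOpen S ∧ ζ ∈ S ∧ S ⊆ U

/-- A union of at most `μ` basic κ-open sets; `(κ,μ)`-open. -/
def IsMuOpen (μ : Cardinal.{u}) (U : Set (K → A)) : Prop :=
  ∃ (ι : Type u) (f : ι → Set (K → A)), #ι ≤ μ ∧ (∀ i, IsBasicOpen (f i)) ∧ U = ⋃ i, f i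

/-- `(κ,μ)`-closed: the complement is `(κ,μ)`-open. -/
def IsMuClosed (μ : Cardinal.{u}) (C : Set (K → A)) : Prop := IsMuOpen μ Cᶜ

/-- The `(κ,μ)`-Borel sets: the smallest class containing the basic κ-open sets and closed
under complements and unions and intersections of length at most `μ`. -/
inductive MuBorel (μ : Cardinal.{u}) : Set (K → A) → Prop
  | basic (S : Set (K → A)) : IsBasicOpen S → MuBorel μ S
  | compl (S : Set (K → A)) : MuBorel μ S → MuBorel μ Sᶜ
  | iUnion (ι : Type u) (f : ι → Set (K → A)) : #ι ≤ μ → (∀ i, MuBorel μ (f i)) →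
      MuBorel μ (⋃ i, f i)
  | iInter (ι : Type u) (f : ι → Set (K → A)) : #ι ≤ μ → (∀ i, MuBorel μ (f i)) →
      MuBorel μ (⋂ i, f i)

/-- κ-open: a union of at most `κ = #K` basic κ-open sets. -/
def IsKOpen (U : Set (K → A)) : Prop := IsMuOpen #K U

/-- κ-closed. -/
def IsKClosed (C : Set (K → A)) : Prop := IsMuClosed #K C

/-- κ-Borel. -/
def KBorel (S : Set (K → A)) : Prop := MuBorel #K S

/- Product space versions, for subsets of `(K → A) × (K → B)`. -/
section Prod

variable {B : Type w}

/-- Basic κ-open subsets of the product: products of basic κ-open sets. -/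
def IsBasicOpen2 (S : Set ((K → A) × (K → B))) : Prop :=
  ∃ (S₁ : Set (K → A)) (S₂ : Set (K → B)), IsBasicOpen S₁ ∧ IsBasicOpen S₂ ∧ S = S₁ ×ˢ S₂

def IsOpenStd2 (U : Set ((K → A) × (K → B))) : Prop :=
  ∀ p ∈ U, ∃ S, IsBasicOpen2 S ∧ p ∈ S ∧ S ⊆ U

def IsMuOpen2 (μ : Cardinal.{u}) (U : Set ((K → A) × (K → B))) : Prop :=
  ∃ (ι : Type u) (f : ι → Set ((K → A) × (K → B))),
    #ι ≤ μ ∧ (∀ i, IsBasicOpen2 (f i)) ∧ U = ⋃ i, f i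

def IsMuClosed2 (μ : Cardinal.{u}) (C : Set ((K → A) × (K → B))) : Prop := IsMuOpen2 μ Cᶜ

inductive MuBorel2 (μ : Cardinal.{u}) : Set ((K → A) × (K → B)) → Prop
  | basic (S : Set ((K → A) × (K → B))) : IsBasicOpen2 S → MuBorel2 μ S
  | compl (S : Set ((K → A) × (K → B))) : MuBorel2 μ S → MuBorel2 μ Sᶜ
  | iUnion (ι : Type u) (f : ι → Set ((K → A) × (K → B))) : #ι ≤ μ → (∀ i, MuBorel2 μ (f i)) →
      MuBorel2 μ (⋃ i, f i)
  | iInter (ι : Type u) (f : ι → Set ((K → A) × (K → B))) : #ι ≤ μ → (∀ i, MuBorel2 μ (f i)) →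
      MuBorel2 μ (⋂ i, f i)

def IsKOpen2 (U : Set ((K → A) × (K → B))) : Prop := IsMuOpen2 #K U

def IsKClosed2 (C : Set ((K → A) × (K → B))) : Prop := IsMuClosed2 #K C

def KBorel2 (S : Set ((K → A) × (K → B))) : Prop := MuBorel2 #K S

/-- κ-Σ¹₁ : projections of κ-Borel subsets of the product. -/
def KSigma11 (S : Set (K → A)) : Prop :=
  ∃ C : Set ((K → A) × (K → A)), KBorel2 C ∧ S = Prod.fst '' C

end Prod

end GDST

namespace GDST

/-- A union of basic open sets whose domains are initial segments , ,
i.e. open in the topology generated by the sets , , . -/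
def IsOpenInit {K : Type u} [LinearOrder K] (U : Set (K → K)) : Prop :=
  ∀ ζ ∈ U, ∃ (a : K) (η : K → K), ζ ∈ nbhd (Set.Iio a) η ∧ nbhd (Set.Iio a) η ⊆ U

/-- Let κ > λ be infinite cardinals with 2^λ > κ. Then the set
{f ∈ κ^κ : f(λ) = f(λ+1)} is clopen in the topology generated by the sets N_η
(η : α → κ, α < κ), but it is not a union of at most κ many such sets N_η. -/
theorem statement1 (κ lam : Cardinal.{u}) (hlam : ℵ₀ ≤ lam) (hlt : lam < κ)
    (h2 : κ < (2 : Cardinal.{u}) ^ lam)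
    (K : Type u) [LinearOrder K] [IsWellOrder K (· < ·)]
    (hK : Ordinal.type ((· < ·) : K → K → Prop) = κ.ord)
    (x y : K) (hx : Ordinal.typein ((· < ·) : K → K → Prop) x = lam.ord)
    (hy : Ordinal.typein ((· < ·) : K → K → Prop) y = lam.ord + 1) :
    IsOpenInit {f : K → K | f x = f y} ∧
    IsOpenInit {f : K → K | f x = f y}ᶜ ∧
    ¬ ∃ (ι : Type u) (a : ι → K) (η : ι → (K → K)),
        #ι ≤ κ ∧ {f : K → K | f x = f y} = ⋃ i, nbhd (Set.Iio (a i)) (η i) := by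
  -- basic facts
  have hxy : x < y := by
    rw [← Ordinal.typein_lt_typein ((· < ·) : K → K → Prop), hx, hy]
    exact lt_add_one _
  have hκ : ℵ₀ ≤ κ := hlam.trans hlt.le
  have hlim : Order.IsSuccLimit (Cardinal.ord κ) := Cardinal.isSuccLimit_ord hκ
  -- there is an element above y
  obtain ⟨b, hb⟩ : ∃ b : K, y < b := by
    have h1 : Ordinal.typein ((· < ·) : K → K → Prop) y + 1 <
        Ordinal.type ((· < ·) : K → K → Prop) := by
      rw [hK, Ordinal.add_one_eq_succ]
      exact hlim.succ_lt (hK ▸ Ordinal.typein_lt_type _ y)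
    obtain ⟨b, hb⟩ := Ordinal.typein_surj ((· < ·) : K → K → Prop) h1
    refine ⟨b, ?_⟩
    rw [← Ordinal.typein_lt_typein ((· < ·) : K → K → Prop), hb]
    exact lt_add_one _
  have hxb : x < b := hxy.trans hb
  refine ⟨?_, ?_, ?_⟩
  · intro ζ hζ
    refine ⟨b, ζ, fun i _ => rfl, fun g hg => ?_⟩
    have h1 := hg x hxb
    have h2 := hg y hb
    simp only [Set.mem_setOf_eq] at hζ ⊢
    rw [h1, h2, hζ]
  · intro ζ hζ
    refine ⟨b, ζ, fun i _ => rfl, fun g hg => ?_⟩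
    have h1 := hg x hxb
    have h2 := hg y hb
    simp only [Set.mem_compl_iff, Set.mem_setOf_eq] at hζ ⊢
    rw [h1, h2]
    exact hζ
  · rintro ⟨ι, a, η, hι, hU⟩
    -- every index i has y < a i
    have hya : ∀ i, y < a i := by
      intro i
      by_contra hcon
      push_neg at hcon
      -- modify η i at y to leave the set
      set v : K := if η i x = x then y else x with hv
      have hvne : v ≠ η i x := by
        rw [hv]; split
        · rename_i h; rw [h]; exact fun e => (hxy.ne e.symm).elim
        · rename_i h; exact fun e => h e.symm
      set g : K → K := Function.update (η i) y v with hg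
      have hgmem : g ∈ nbhd (Set.Iio (a i)) (η i) := by
        intro j hj
        have : j ≠ y := fun e => absurd (e ▸ hj) (not_lt.2 hcon)
        simp [hg, Function.update_of_ne this]
      have : g ∈ {f : K → K | f x = f y} := by
        rw [hU]; exact Set.mem_iUnion.2 ⟨i, hgmem⟩
      simp only [Set.mem_setOf_eq] at this
      rw [hg] at this
      rw [Function.update_of_ne hxy.ne, Function.update_self] at this
      exact hvne this.symm
    -- the family of functions coded by u : Iio x → Bool
    set F : (Set.Iio x → Bool) → (K → K) := fun u z =>
      if h : z < x then (if u ⟨z, h⟩ then y else x) else x with hF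
    have hFmem : ∀ u, F u ∈ {f : K → K | f x = f y} := by
      intro u
      simp only [Set.mem_setOf_eq, hF]
      rw [dif_neg (lt_irrefl x), dif_neg (not_lt.2 hxy.le)]
    -- choose an index for each u
    have hchoice : ∀ u, ∃ i, F u ∈ nbhd (Set.Iio (a i)) (η i) := by
      intro u
      have := hFmem u
      rw [hU] at this
      exact Set.mem_iUnion.1 this
    choose I hI using hchoice
    have hIinj : Function.Injective I := by
      intro u u' he
      funext z
      have h1 := hI u z.1 (z.2.trans (hxy.trans (hya (I u))))
      have h2 := hI u' z.1 (z.2.trans (hxy.trans (hya (I u'))))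
      rw [he] at h1
      have key : ∀ v : ↑(Set.Iio x) → Bool, F v z.1 = if v z then y else x :=
        fun v => dif_pos z.2
      have hthis : (if u z then y else x) = (if u' z then y else x) :=
        (key u).symm.trans (h1.trans (h2.symm.trans (key u')))
      cases hu : u z <;> cases hu' : u' z <;> rw [hu, hu'] at hthis <;>
        simp only [Bool.false_eq_true, ite_true, ite_false, if_true, if_false] at hthis <;>
        first
          | rfl
          | exact absurd hthis hxy.ne
          | exact absurd hthis hxy.ne'
    -- cardinality contradiction
    have hcard : (2 : Cardinal.{u}) ^ lam ≤ #ι := by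
      have h1 : #(Set.Iio x → Bool) ≤ #ι := Cardinal.mk_le_of_injective hIinj
      have h2 : #(Set.Iio x) = lam := by
        have : #{z // z < x} = (Ordinal.typein ((· < ·) : K → K → Prop) x).card :=
          Ordinal.card_typein x
        rw [hx, Cardinal.card_ord] at this
        exact this
      calc (2 : Cardinal.{u}) ^ lam = #(Set.Iio x → Bool) := by
            rw [Cardinal.mk_arrow, Cardinal.mk_bool, h2]
            simp
        _ ≤ #ι := h1
    exact absurd (hcard.trans hι) (not_le.2 h2)

end GDST
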